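/- Let B be a type, h ≥ 1, and R : Fin (h+1) → Set B a family of sets with ⋂_{i} R i = ∅, and suppose A⁰ := ⋂_{i ≠ 1} R i and A¹ := ⋂_{i ≠ 0} R i are both nonempty. Let ℓ', u be natural numbers, s : Fin u → Bool a family of clause signs, and v₁, v₂, v₃ : Fin u → Fin ℓ' families of variable indices. Write R' false = R 0 and R' true = R 1. Then there exists a Boolean assignment x : Fin ℓ' → Bool such that for every t ∈ Fin u at least one of x (v₁ t) = s t, x (v₂ t) = s t, x (v₃ t) = s t holds, if and only if there exists a : Fin ℓ' → B such that (i) a k ∈ R i for every k ∈ Fin ℓ' and every i with i ≠ 0 and i ≠ 1, and (ii) for every t ∈ Fin u at least one of a (v₁ t) ∈ R' (s t), a (v₂ t) ∈ R' (s t), a (v₃ t) ∈ R' (s t) holds. -/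
import Mathlib


/-- The MONSAT encoding at the core of Theorem 6: a monotone 3-CNF (clause `t` requires
`x = s t` at one of the positions `v₁ t, v₂ t, v₃ t`) is satisfiable iff the associated
CSP instance over `B` (with `A⁰ = ⋂_{i ≠ 1} R i` and `A¹ = ⋂_{i ≠ 0} R i` encoding the
Boolean values) is satisfiable. -/
theorem monSat_encoding {B : Type*} (h : ℕ) (hh : 1 ≤ h) (R : Fin (h + 1) → Set B)
    (hempty : (⋂ i, R i) = ∅)
    (hA0 : (⋂ i, ⋂ _ : i ≠ (1 : Fin (h + 1)), R i).Nonempty)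
    (hA1 : (⋂ i, ⋂ _ : i ≠ (0 : Fin (h + 1)), R i).Nonempty)
    (ℓ' u : ℕ) (s : Fin u → Bool) (v₁ v₂ v₃ : Fin u → Fin ℓ') :
    (∃ x : Fin ℓ' → Bool,
        ∀ t : Fin u, x (v₁ t) = s t ∨ x (v₂ t) = s t ∨ x (v₃ t) = s t) ↔
      (∃ a : Fin ℓ' → B,
        (∀ k : Fin ℓ', ∀ i : Fin (h + 1), i ≠ 0 → i ≠ 1 → a k ∈ R i) ∧
        (∀ t : Fin u,
          a (v₁ t) ∈ (if s t then R 1 else R 0) ∨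
          a (v₂ t) ∈ (if s t then R 1 else R 0) ∨
          a (v₃ t) ∈ (if s t then R 1 else R 0))) := by
  classical
  have h01 : (0 : Fin (h + 1)) ≠ 1 := by
    intro he
    have : (0 : ℕ) = 1 % (h + 1) := congrArg Fin.val he
    rw [Nat.mod_eq_of_lt (by omega)] at this
    exact Nat.zero_ne_one this
  obtain ⟨b0, hb0⟩ := hA0
  obtain ⟨b1, hb1⟩ := hA1
  have hb0mem : ∀ i : Fin (h + 1), i ≠ 1 → b0 ∈ R i := by
    intro i hi
    exact Set.mem_iInter.mp (Set.mem_iInter.mp hb0 i) hi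
  have hb1mem : ∀ i : Fin (h + 1), i ≠ 0 → b1 ∈ R i := by
    intro i hi
    exact Set.mem_iInter.mp (Set.mem_iInter.mp hb1 i) hi
  constructor
  · rintro ⟨x, hx⟩
    refine ⟨fun k => if x k then b1 else b0, ?_, ?_⟩
    · intro k i hi0 hi1
      by_cases hk : x k <;> simp [hk, hb0mem i hi1, hb1mem i hi0]
    · intro t
      have key : ∀ j : Fin ℓ', x j = s t →
          (if x j then b1 else b0) ∈ (if s t then R 1 else R 0) := by
        intro j hj
        cases hs : s t <;> rw [hs] at hj <;>
          simp [hj, hb0mem 0 h01, hb1mem 1 (Ne.symm h01)]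
      rcases hx t with h1 | h1 | h1
      · exact Or.inl (key _ h1)
      · exact Or.inr (Or.inl (key _ h1))
      · exact Or.inr (Or.inr (key _ h1))
  · rintro ⟨a, ha, hc⟩
    refine ⟨fun k => if a k ∈ R 0 then false else true, ?_⟩
    intro t
    have key : ∀ j : Fin ℓ', a j ∈ (if s t then R 1 else R 0) →
        (if a j ∈ R 0 then false else true) = s t := by
      intro j hj
      cases hs : s t <;> rw [hs] at hj <;> simp at hj
      · simp [hj]
      · have : a j ∉ R 0 := by
          intro h0
          have : a j ∈ ⋂ i, R i := by
            refine Set.mem_iInter.mpr fun i => ?_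
            by_cases hi0 : i = 0
            · exact hi0 ▸ h0
            · by_cases hi1 : i = 1
              · exact hi1 ▸ hj
              · exact ha j i hi0 hi1
          rw [hempty] at this
          exact this.elim
        simp [this]
    rcases hc t with h1 | h1 | h1
    · exact Or.inl (key _ h1)
    · exact Or.inr (Or.inl (key _ h1))
    · exact Or.inr (Or.inr (key _ h1))
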